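/- A left R-module M is lifting if and only if for every submodule X of M there is a decomposition M = A ⊕ B with A ⊆ X, X ∩ B ⊆ Rad(B), and X ∩ B PSD in B. -/

import Mathlib

open Submodule Function

/-- A submodule `N` of `M` is PSD in `M` if whenever `N + X = M`, there is a
projective direct summand `S` of `M` with `S ≤ N` and `M = S ⊕ X`. -/
def IsPSD (R : Type*) [Ring R] {M : Type*} [AddCommGroup M] [Module R M]
    (N : Submodule R M) : Prop :=
  ∀ X : Submodule R M, N ⊔ X = ⊤ →
    ∃ S : Submodule R M, S ≤ N ∧ Module.Projective R ↥S ∧ IsCompl S X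

/-- `N` is small in `M`: `N + L = M` implies `L = M`. -/
def IsSmallSub (R : Type*) [Ring R] {M : Type*} [AddCommGroup M] [Module R M]
    (N : Submodule R M) : Prop :=
  ∀ L : Submodule R M, N ⊔ L = ⊤ → L = ⊤

/-- The (Jacobson) radical of a module: intersection of all maximal submodules. -/
def radM (R M : Type*) [Ring R] [AddCommGroup M] [Module R M] : Submodule R M :=
  sInf {m : Submodule R M | IsCoatom m}

/-- `M` is supplemented: every submodule `X` has a submodule `Y` with `X + Y = M`
and `X ∩ Y` small in `Y`. -/
def IsSupplemented (R M : Type*) [Ring R] [AddCommGroup M] [Module R M] : Prop :=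
  ∀ X : Submodule R M, ∃ Y : Submodule R M, X ⊔ Y = ⊤ ∧
    IsSmallSub R (Submodule.comap Y.subtype X)

/-- `M` is lifting: every submodule `N` admits a decomposition `M = A ⊕ B` with
`A ≤ N` and `N ∩ B` small in `B`. -/
def IsLifting (R M : Type*) [Ring R] [AddCommGroup M] [Module R M] : Prop :=
  ∀ N : Submodule R M, ∃ A B : Submodule R M, IsCompl A B ∧ A ≤ N ∧
    IsSmallSub R (Submodule.comap B.subtype N)

/-- `Y` is an `I`-supplement of `X` in `M`: `X + Y = M`, `X ∩ Y ⊆ IY`, and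
`X ∩ Y` is PSD in `Y`. -/
def IsISupplementOf {R : Type*} [Ring R] {M : Type*} [AddCommGroup M] [Module R M]
    (I : Ideal R) (Y X : Submodule R M) : Prop :=
  X ⊔ Y = ⊤ ∧ X ⊓ Y ≤ I • Y ∧ IsPSD R (Submodule.comap Y.subtype X)

/-- `M` is `I`-supplemented: every submodule has an `I`-supplement in `M`. -/
def IsISupplemented {R : Type*} [Ring R] (I : Ideal R) (M : Type*)
    [AddCommGroup M] [Module R M] : Prop :=
  ∀ X : Submodule R M, ∃ Y : Submodule R M, IsISupplementOf I Y X


section JacHelpers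
variable {R : Type*} [Ring R]

lemma jac_left_inv {a : R} (ha : a ∈ (⊥ : Ideal R).jacobson) : ∃ z : R, z * (1 - a) = 1 := by
  obtain ⟨z, hz⟩ := Ideal.mem_jacobson_iff.mp ha (-1)
  refine ⟨z, ?_⟩
  have h : z * -1 * a + z - 1 = 0 := by simpa using hz
  have h2 : z * (1 - a) = z * -1 * a + z := by noncomm_ring
  rw [h2]
  exact sub_eq_zero.mp h

lemma jac_unit {a : R} (ha : a ∈ (⊥ : Ideal R).jacobson) : IsUnit (1 - a) := by
  obtain ⟨z, hz⟩ := jac_left_inv ha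
  have hz2 : z = 1 + z * a := by
    have h3 : z - z * a = 1 := by rw [← hz]; noncomm_ring
    exact sub_eq_iff_eq_add.mp h3
  have hmem : -(z * a) ∈ (⊥ : Ideal R).jacobson := neg_mem (Ideal.mul_mem_left _ z ha)
  obtain ⟨w, hw⟩ := jac_left_inv hmem
  have hwz : w * z = 1 := by
    rw [hz2, ← sub_neg_eq_add]; exact hw
  have hzright : (1 - a) * z = 1 := by
    have h1 : (1 - a) = w := by
      calc (1 - a) = (w * z) * (1 - a) := by rw [hwz, one_mul]
        _ = w * (z * (1 - a)) := by rw [mul_assoc]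
        _ = w := by rw [hz, mul_one]
    rw [h1, hwz]
  exact ⟨⟨1 - a, z, hzright, hz⟩, rfl⟩

lemma jac_mul_right {a : R} (r : R) (ha : a ∈ (⊥ : Ideal R).jacobson) :
    a * r ∈ (⊥ : Ideal R).jacobson :=
  Ideal.mul_mem_right r _ ha

lemma nakayama_vec {ι : Type*} [DecidableEq ι] (T : Finset ι) :
    ∀ (c : ι → R) (b : ι → ι → R), (∀ p q, b p q ∈ (⊥ : Ideal R).jacobson) →
      (∀ q ∈ T, c q = ∑ p ∈ T, c p * b p q) → ∀ q ∈ T, c q = 0 := by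
  induction T using Finset.induction_on with
  | empty => intro c b hb heq q hq; exact absurd hq (Finset.notMem_empty q)
  | @insert a s ha ih =>
    intro c b hb heq
    have hu : IsUnit (1 - b a a) := jac_unit (hb a a)
    set u : Rˣ := hu.unit with hu_def
    have hu_spec : (u : R) = 1 - b a a := hu.unit_spec
    have h1 : c a * (1 - b a a) = ∑ p ∈ s, c p * b p a := by
      have h0 := heq a (Finset.mem_insert_self a s)
      rw [Finset.sum_insert ha] at h0
      rw [mul_sub, mul_one, sub_eq_iff_eq_add]
      exact h0.trans (add_comm _ _)
    have hca : c a = (∑ p ∈ s, c p * b p a) * (↑u⁻¹ : R) := by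
      have := congrArg (· * (↑u⁻¹ : R)) h1
      simpa [mul_assoc, ← hu_spec, u.mul_inv] using this
    set b' : ι → ι → R := fun p q => b p q + b p a * ((↑u⁻¹ : R) * b a q) with hb'_def
    have hb' : ∀ p q, b' p q ∈ (⊥ : Ideal R).jacobson := fun p q =>
      add_mem (hb p q) (jac_mul_right _ (hb p a))
    have heq' : ∀ q ∈ s, c q = ∑ p ∈ s, c p * b' p q := by
      intro q hq
      have h2 : c q = c a * b a q + ∑ p ∈ s, c p * b p q := by
        rw [heq q (Finset.mem_insert_of_mem hq), Finset.sum_insert ha]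
      rw [h2, hca, Finset.sum_mul, Finset.sum_mul, ← Finset.sum_add_distrib]
      refine Finset.sum_congr rfl fun p hp => ?_
      simp only [hb'_def]
      noncomm_ring
    have hzero := ih c b' hb' heq'
    have hca0 : c a = 0 := by
      rw [hca, Finset.sum_eq_zero (fun p hp => by rw [hzero p hp, zero_mul]), zero_mul]
    intro q hq
    rcases Finset.mem_insert.mp hq with rfl | hq
    · exact hca0
    · exact hzero q hq

end JacHelpers

section ModHelpers
variable {R : Type*} [Ring R] {M N : Type*} [AddCommGroup M] [Module R M]
  [AddCommGroup N] [Module R N]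

lemma isCoatom_comap {f : M →ₗ[R] N} {m : Submodule R N} (hm : IsCoatom m)
    (hne : Submodule.comap f m ≠ ⊤) : IsCoatom (Submodule.comap f m) := by
  refine ⟨hne, fun K hK => ?_⟩
  obtain ⟨x, hxK, hxm⟩ := SetLike.exists_of_lt hK
  have hfx : f x ∉ m := hxm
  have h1 : m ⊔ Submodule.map f K = ⊤ := by
    refine hm.2 _ (lt_of_le_of_ne le_sup_left fun h => ?_)
    exact hfx (h ▸ Submodule.mem_sup_right ⟨x, hxK, rfl⟩)
  rw [eq_top_iff]
  intro y _
  have hy : f y ∈ m ⊔ Submodule.map f K := h1 ▸ Submodule.mem_top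
  obtain ⟨w, hw, z, ⟨k, hk, rfl⟩, hsum⟩ := Submodule.mem_sup.mp hy
  have hyk' : y - k ∈ Submodule.comap f m := by
    simp only [Submodule.mem_comap, map_sub]
    rw [← hsum]; simpa using hw
  have hyk : y - k ∈ K := hK.le hyk'
  simpa using K.add_mem hyk hk

lemma map_radM_le (f : M →ₗ[R] N) : (radM R M).map f ≤ radM R N := by
  refine le_sInf fun m hm => ?_
  rw [Submodule.map_le_iff_le_comap]
  by_cases h : Submodule.comap f m = ⊤
  · rw [h]; exact le_top
  · exact sInf_le (isCoatom_comap hm h)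

lemma radM_finsupp_coord {ι : Type*} {g : ι →₀ R} (hg : g ∈ radM R (ι →₀ R)) (i : ι) :
    g i ∈ (⊥ : Ideal R).jacobson := by
  refine Submodule.mem_sInf.mpr fun J hJ => ?_
  have hJc : IsCoatom J := Ideal.isMaximal_def.mp hJ.2
  have hne : Submodule.comap (Finsupp.lapply i : (ι →₀ R) →ₗ[R] R) J ≠ ⊤ := by
    intro h
    have : Finsupp.single i (1 : R) ∈ Submodule.comap (Finsupp.lapply i) J :=
      h ▸ Submodule.mem_top
    simp only [Submodule.mem_comap, Finsupp.lapply_apply, Finsupp.single_eq_same] at this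
    exact hJc.1 ((Ideal.eq_top_iff_one J).mpr this)
  have : g ∈ Submodule.comap (Finsupp.lapply i : (ι →₀ R) →ₗ[R] R) J :=
    Submodule.mem_sInf.mp hg _ (isCoatom_comap hJc hne)
  simpa using this

/-- Bass' lemma: a projective module equal to its own radical is zero. -/
lemma eq_zero_of_projective_radM_top {P : Type*} [AddCommGroup P] [Module R P]
    [hp : Module.Projective R P] (h : radM R P = ⊤) (x : P) : x = 0 := by
  classical
  obtain ⟨s, hs⟩ := Module.projective_def.mp hp
  have key : ∀ (y : P) (i : P), s y i ∈ (⊥ : Ideal R).jacobson := by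
    intro y i
    refine radM_finsupp_coord (map_radM_le s ⟨y, ?_, rfl⟩) i
    rw [h]; exact Submodule.mem_top
  set c : P →₀ R := s x with hc
  have hrepr : ∀ q : P, c q = ∑ p ∈ c.support, c p * (s p) q := by
    intro q
    have hx : x = ∑ p ∈ c.support, c p • p := by
      conv_lhs => rw [← hs x]
      rw [Finsupp.linearCombination_apply, Finsupp.sum]
      simp
      rfl
    have hcs : c = ∑ p ∈ c.support, c p • s p := by
      conv_lhs => rw [hc, hx]
      simp [map_sum]
    conv_lhs => rw [hcs]
    rw [Finsupp.coe_finset_sum, Finset.sum_apply]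
    simp [Finsupp.smul_apply, smul_eq_mul]
  have hvec := nakayama_vec c.support (fun i => c i) (fun p q => s p q)
    (fun p q => key p q) (fun q _ => hrepr q)
  have hc0 : c = 0 := by
    ext q
    by_cases hq : q ∈ c.support
    · exact hvec q hq
    · exact Finsupp.notMem_support_iff.mp hq
  rw [← hs x, ← hc, hc0, map_zero]

lemma small_le_radM {X : Submodule R M} (h : IsSmallSub R X) : X ≤ radM R M := by
  refine le_sInf fun m hm => ?_
  by_contra hnm
  exact hm.1 (h m (hm.2 _ (right_lt_sup.mpr hnm)))

lemma projective_of_subsingleton' (P : Type*) [AddCommGroup P] [Module R P] [Subsingleton P] :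
    Module.Projective R P :=
  Module.projective_def.mpr ⟨0, fun _ => Subsingleton.elim _ _⟩

lemma IsSmallSub.isPSD {X : Submodule R M} (h : IsSmallSub R X) : IsPSD R X := by
  intro Y hY
  have hY' := h Y hY
  subst hY'
  exact ⟨⊥, bot_le, projective_of_subsingleton' _, isCompl_bot_top⟩

end ModHelpers

theorem stmt8 {R M : Type*} [Ring R] [AddCommGroup M] [Module R M] :
    IsLifting R M ↔
      ∀ X : Submodule R M, ∃ A B : Submodule R M, IsCompl A B ∧ A ≤ X ∧
        Submodule.comap B.subtype X ≤ radM R ↥B ∧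
        IsPSD R (Submodule.comap B.subtype X) := by
  constructor
  · intro hl X
    obtain ⟨A, B, hcpl, hA, hsmall⟩ := hl X
    exact ⟨A, B, hcpl, hA, small_le_radM hsmall, hsmall.isPSD⟩
  · intro h X
    obtain ⟨A, B, hcpl, hA, hrad, hpsd⟩ := h X
    refine ⟨A, B, hcpl, hA, fun L hL => ?_⟩
    obtain ⟨S, hSle, hSproj, hScompl⟩ := hpsd L hL
    have hS : S ≤ radM R ↥B := hSle.trans hrad
    have hradS : radM R ↥S = ⊤ := by
      rw [eq_top_iff]
      rintro x -
      have hmem : (↑x : ↥B) ∈ radM R ↥B := hS x.2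
      have hx : x ∈ (radM R ↥B).map (S.linearProjOfIsCompl L hScompl) :=
        ⟨↑x, hmem, Submodule.linearProjOfIsCompl_apply_left hScompl x⟩
      exact map_radM_le _ hx
    have hSbot : S = ⊥ := by
      rw [Submodule.eq_bot_iff]
      intro y hy
      have := eq_zero_of_projective_radM_top (hp := hSproj) hradS ⟨y, hy⟩
      exact congrArg Subtype.val this
    have hcod := hScompl.codisjoint
    rw [hSbot, codisjoint_iff, bot_sup_eq] at hcod
    exact hcod
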